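/- For the binary operation ∘ on the three-element set {0,1,2} defined by x ∘ y = 1 if x = y ∈ {1,2} and x ∘ y = 0 otherwise (i.e. 1∘1 = 2∘2 = 1 and all other products are 0), the associative spectrum satisfies s(n) = F_{n+1} − 1 for every n ≥ 2, where F_k denotes the k-th Fibonacci number (F_1 = F_2 = 1). (Paper's Proposition 5.6; this is operation 79 in the Siena Catalog.) -/

import Mathlib

/-- A bracketing of size `n`: a full binary tree with `n` leaves. -/
inductive Bracketing : ℕ → Type
  | leaf : Bracketing 1
  | node : {k l : ℕ} → Bracketing k → Bracketing l → Bracketing (k + l)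

/-- The `n`-ary regular operation induced by a bracketing on a magma `(G, op)`. -/
def Bracketing.eval {G : Type*} (op : G → G → G) : {n : ℕ} → Bracketing n → (Fin n → G) → G
  | _, .leaf, v => v 0
  | _, .node P Q, v =>
      op (Bracketing.eval op P (fun i => v (Fin.castAdd _ i)))
         (Bracketing.eval op Q (fun i => v (Fin.natAdd _ i)))

/-- The associative spectrum: the number of distinct `n`-ary regular operations. -/
noncomputable def assocSpectrum {G : Type*} (op : G → G → G) (n : ℕ) : ℕ :=
  Nat.card {f : (Fin n → G) → G // ∃ B : Bracketing n, f = Bracketing.eval op B}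

/-- The depth of the `i`-th leaf of a bracketing. -/
def Bracketing.depth : {n : ℕ} → Bracketing n → Fin n → ℕ
  | _, .leaf, _ => 0
  | _, .node (k := k) P Q, i =>
      if h : (i : ℕ) < k then Bracketing.depth P ⟨i, h⟩ + 1
      else Bracketing.depth Q ⟨(i : ℕ) - k, by have := i.isLt; omega⟩ + 1

/-- The right depth of the `i`-th leaf of a bracketing. -/
def Bracketing.rdepth : {n : ℕ} → Bracketing n → Fin n → ℕ
  | _, .leaf, _ => 0
  | _, .node (k := k) P Q, i =>
      if h : (i : ℕ) < k then Bracketing.rdepth P ⟨i, h⟩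
      else Bracketing.rdepth Q ⟨(i : ℕ) - k, by have := i.isLt; omega⟩ + 1

/-- The left depth of the `i`-th leaf of a bracketing. -/
def Bracketing.ldepth : {n : ℕ} → Bracketing n → Fin n → ℕ
  | _, .leaf, _ => 0
  | _, .node (k := k) P Q, i =>
      if h : (i : ℕ) < k then Bracketing.ldepth P ⟨i, h⟩ + 1
      else Bracketing.ldepth Q ⟨(i : ℕ) - k, by have := i.isLt; omega⟩

/-- A magma operation is Catalan if distinct bracketings of equal size
    induce distinct regular operations. -/
def IsCatalanOp {G : Type*} (op : G → G → G) : Prop :=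
  ∀ (n : ℕ) (B₁ B₂ : Bracketing n), B₁ ≠ B₂ →
    Bracketing.eval op B₁ ≠ Bracketing.eval op B₂

def Bracketing.isLeaf : {n : ℕ} → Bracketing n → Bool
  | _, .leaf => true
  | _, .node _ _ => false

def Bracketing.comp : {n : ℕ} → Bracketing n → List ℕ
  | _, .leaf => [1]
  | _, .node P Q => if P.isLeaf && Q.isLeaf then [2] else P.comp ++ Q.comp

def ok : List ℕ → List (Fin 3) → Prop
  | [], [] => True
  | 1 :: l, x :: w => x = 1 ∧ ok l w
  | 2 :: l, x :: y :: w => x = y ∧ x ≠ 0 ∧ ok l w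
  | _, _ => False

lemma comp_valid : ∀ {n} (B : Bracketing n), ∀ x ∈ B.comp, x = 1 ∨ x = 2 := by
  intro n B
  induction B with
  | leaf => simp [Bracketing.comp]
  | node P Q ihP ihQ =>
    rw [Bracketing.comp]
    split
    · simp
    · intro x hx
      rcases List.mem_append.1 hx with h | h
      exacts [ihP x h, ihQ x h]

lemma comp_sum : ∀ {n} (B : Bracketing n), B.comp.sum = n := by
  intro n B
  induction B with
  | leaf => simp [Bracketing.comp]
  | node P Q ihP ihQ =>
    rw [Bracketing.comp]
    split
    · next h => cases P <;> cases Q <;> simp_all [Bracketing.isLeaf]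
    · simp [ihP, ihQ]

lemma comp_two : ∀ {n} (B : Bracketing n), B.isLeaf = false → 2 ∈ B.comp := by
  intro n B
  induction B with
  | leaf => simp [Bracketing.isLeaf]
  | node P Q ihP ihQ =>
    intro _
    rw [Bracketing.comp]
    split
    · simp
    · next h =>
      rw [Bool.and_eq_true] at h
      push_neg at h
      rw [List.mem_append]
      by_cases hP : P.isLeaf = true
      · exact Or.inr (ihQ (by simpa [hP] using h))
      · exact Or.inl (ihP (by simpa using hP))

lemma ok_append : ∀ (l1 : List ℕ) (w1 : List (Fin 3)) (l2 : List ℕ) (w2 : List (Fin 3)),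
    w1.length = l1.sum → (ok (l1 ++ l2) (w1 ++ w2) ↔ ok l1 w1 ∧ ok l2 w2) := by
  intro l1
  induction l1 with
  | nil =>
    intro w1 l2 w2 h
    simp at h
    subst h
    simp [ok]
  | cons x l1 ih =>
    intro w1 l2 w2 h
    match x, w1, h with
    | 1, y :: w1, h =>
      simp only [List.cons_append, ok, List.append_eq,
        ih w1 l2 w2 (by simp at h; omega)]
      tauto
    | 2, y :: z :: w1, h =>
      simp only [List.cons_append, ok, List.append_eq,
        ih w1 l2 w2 (by simp at h; omega)]
      tauto
    | 1, [], h => simp at h; omega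
    | 2, [], h => simp at h; omega
    | 2, [y], h => simp at h; omega
    | 0, w1, h => cases w1 <;> simp [ok]
    | (k+3), w1, h => cases w1 <;> simp [ok]

def op3 : Fin 3 → Fin 3 → Fin 3 := fun x y => if x = y ∧ x ≠ 0 then 1 else 0

lemma size_pos : ∀ {n}, Bracketing n → 0 < n := by
  intro n B
  induction B with
  | leaf => norm_num
  | node P Q ihP ihQ => omega

@[simp] lemma isLeaf_leaf : (Bracketing.leaf).isLeaf = true := rfl
@[simp] lemma isLeaf_node {k l} (P : Bracketing k) (Q : Bracketing l) :
    (P.node Q).isLeaf = false := rfl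
lemma comp_node {k l} (P : Bracketing k) (Q : Bracketing l) :
    (P.node Q).comp = if P.isLeaf && Q.isLeaf then [2] else P.comp ++ Q.comp := rfl
lemma comp_leaf : (Bracketing.leaf).comp = [1] := rfl
lemma eval_node {G : Type*} (op : G → G → G) {k l} (P : Bracketing k) (Q : Bracketing l)
    (v : Fin (k + l) → G) :
    (P.node Q).eval op v =
      op (P.eval op fun i => v (Fin.castAdd _ i)) (Q.eval op fun i => v (Fin.natAdd _ i)) := rfl
lemma ofFn_add_castAdd {α : Type*} {m n : ℕ} (f : Fin (m + n) → α) :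
    List.ofFn f = List.ofFn (fun i => f (Fin.castAdd n i)) ++ List.ofFn (fun j => f (Fin.natAdd m j)) :=
  List.ofFn_add

lemma eval_leaf {G : Type*} (op : G → G → G) (v : Fin 1 → G) :
    (Bracketing.leaf).eval op v = v 0 := rfl

open Classical in
lemma eval_eq : ∀ {n} (B : Bracketing n) (v : Fin n → Fin 3),
    if B.isLeaf then B.eval op3 v = v ⟨0, size_pos B⟩
    else B.eval op3 v = if ok B.comp (List.ofFn v) then 1 else 0 := by
  intro n B
  induction B with
  | leaf => intro v; simp [Bracketing.isLeaf, Bracketing.eval]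
  | node P Q ihP ihQ =>
    intro v
    simp only [isLeaf_node, Bool.false_eq_true, if_false]
    rw [eval_node, comp_node, ofFn_add_castAdd]
    cases P <;> cases Q
    · -- leaf leaf
      rw [eval_leaf, eval_leaf]
      simp only [isLeaf_leaf, Bool.and_self, if_true, List.ofFn_succ, List.ofFn_zero]
      simp only [ok, op3, and_true, List.cons_append, List.nil_append]
    · -- leaf node
      next k' l' Q1 Q2 =>
      have hQ := ihQ (fun i => v (Fin.natAdd _ i))
      simp only [isLeaf_node, Bool.false_eq_true, if_false] at hQ
      rw [eval_leaf, hQ]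
      simp only [isLeaf_leaf, isLeaf_node, Bool.and_false, Bool.false_eq_true, if_false,
        List.ofFn_succ, List.ofFn_zero, comp_leaf, List.cons_append, List.nil_append]
      show op3 _ _ = _
      simp only [ok, op3]
      rcases Classical.em (ok (Q1.node Q2).comp ((List.ofFn fun i => v (Fin.natAdd 1 i)))) with h | h <;>
        simp [h] <;> split <;> simp_all <;> omega
    · -- node leaf
      next k' l' P1 P2 =>
      have hP := ihP (fun i => v (Fin.castAdd _ i))
      simp only [isLeaf_node, Bool.false_eq_true, if_false] at hP
      rw [eval_leaf, hP]
      simp only [isLeaf_leaf, isLeaf_node, Bool.false_and, Bool.false_eq_true, if_false,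
        List.ofFn_succ, List.ofFn_zero]
      show op3 _ _ = _
      rw [ok_append _ _ _ _ (by simp [comp_sum])]
      simp only [ok, comp_leaf, op3, and_true]
      rcases Classical.em (ok (P1.node P2).comp ((List.ofFn fun i => v (Fin.castAdd 1 i)))) with h | h <;>
        simp [h]
      simp [eq_comm]
    · -- node node
      next k1 l1 P1 P2 k2 l2 Q1 Q2 =>
      have hP := ihP (fun i => v (Fin.castAdd _ i))
      have hQ := ihQ (fun i => v (Fin.natAdd _ i))
      simp only [isLeaf_node, Bool.false_eq_true, if_false] at hP hQ
      rw [hP, hQ]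
      simp only [isLeaf_node, Bool.false_and, Bool.false_eq_true, if_false]
      rw [ok_append _ _ _ _ (by simp [comp_sum])]
      show op3 _ _ = _
      simp only [op3]
      split <;> split <;> simp_all

def wit : List ℕ → List (Fin 3)
  | [] => []
  | 1 :: l => 1 :: wit l
  | 2 :: l => 2 :: 2 :: wit l
  | _ :: l => wit l

lemma wit_length : ∀ (l : List ℕ), (∀ x ∈ l, x = 1 ∨ x = 2) → (wit l).length = l.sum := by
  intro l
  induction l with
  | nil => simp [wit]
  | cons x l ih =>
    intro h
    rcases h x (by simp) with rfl | rfl <;>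
      simp [wit, ih (fun y hy => h y (by simp [hy]))] <;> omega

lemma ok_wit : ∀ (l : List ℕ), (∀ x ∈ l, x = 1 ∨ x = 2) → ok l (wit l) := by
  intro l
  induction l with
  | nil => simp [wit, ok]
  | cons x l ih =>
    intro h
    rcases h x (by simp) with rfl | rfl <;>
      simp [wit, ok, ih (fun y hy => h y (by simp [hy]))]

lemma distinguish : ∀ (l l' : List ℕ), (∀ x ∈ l, x = 1 ∨ x = 2) → (∀ x ∈ l', x = 1 ∨ x = 2) →
    ok l (wit l') → ok l' (wit l) → l = l' := by
  intro l
  induction l with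
  | nil =>
    intro l' _ h' h1 h2
    cases l' with
    | nil => rfl
    | cons y l' =>
      rcases h' y (by simp) with rfl | rfl <;> simp [wit, ok] at h1
  | cons x l ih =>
    intro l' h h' h1 h2
    cases l' with
    | nil =>
      rcases h x (by simp) with rfl | rfl <;> simp [wit, ok] at h2
    | cons y l' =>
      rcases h x (by simp) with rfl | rfl <;> rcases h' y (by simp) with rfl | rfl <;>
        simp only [wit, ok] at h1 h2
      · rw [ih l' (fun z hz => h z (by simp [hz])) (fun z hz => h' z (by simp [hz])) h1.2 h2.2]
      · exact absurd h1.1 (by decide)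
      · exact absurd h2.1 (by decide)
      · rw [ih l' (fun z hz => h z (by simp [hz])) (fun z hz => h' z (by simp [hz])) h1.2.2 h2.2.2]

def Bracketing.cast {m n : ℕ} (h : m = n) (B : Bracketing m) : Bracketing n := h ▸ B
lemma comp_cast {m n : ℕ} (h : m = n) (B : Bracketing m) : (B.cast h).comp = B.comp := by
  subst h; rfl
lemma isLeaf_cast {m n : ℕ} (h : m = n) (B : Bracketing m) : (B.cast h).isLeaf = B.isLeaf := by
  subst h; rfl
lemma eval_cast {m n : ℕ} (h : m = n) (B : Bracketing m) {G : Type*} (op : G → G → G) :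
    (B.cast h).eval op = fun v => B.eval op (fun i => v (Fin.cast h i)) := by
  subst h; rfl

lemma extend : ∀ (l : List ℕ), (∀ x ∈ l, x = 1 ∨ x = 2) →
    ∀ {m} (B : Bracketing m), B.isLeaf = false →
    ∃ C : Bracketing (m + l.sum), C.isLeaf = false ∧ C.comp = B.comp ++ l := by
  intro l
  induction l with
  | nil =>
    intro _ m B hB
    exact ⟨B.cast (by simp), by rw [isLeaf_cast]; exact hB, by rw [comp_cast]; simp⟩
  | cons x l ih =>
    intro hv m B hB
    rcases hv x (by simp) with rfl | rfl
    · obtain ⟨C, hC1, hC2⟩ := ih (fun y hy => hv y (by simp [hy])) (B.node .leaf)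
        (by simp)
      refine ⟨C.cast (by simp; omega), ?_, ?_⟩
      · rw [isLeaf_cast]; exact hC1
      · rw [comp_cast, hC2, comp_node, hB]
        simp [comp_leaf]
    · obtain ⟨C, hC1, hC2⟩ := ih (fun y hy => hv y (by simp [hy])) (B.node (.node .leaf .leaf))
        (by simp)
      refine ⟨C.cast (by simp; omega), ?_, ?_⟩
      · rw [isLeaf_cast]; exact hC1
      · rw [comp_cast, hC2, comp_node, hB]
        simp [comp_node, comp_leaf]

lemma exists_brack : ∀ (l : List ℕ), (∀ x ∈ l, x = 1 ∨ x = 2) → 2 ∈ l →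
    ∃ B : Bracketing l.sum, B.isLeaf = false ∧ B.comp = l := by
  intro l
  induction l with
  | nil => simp
  | cons x l ih =>
    intro hv h2
    rcases hv x (by simp) with rfl | rfl
    · have h2' : 2 ∈ l := by simpa using h2
      obtain ⟨B, hB1, hB2⟩ := ih (fun y hy => hv y (by simp [hy])) h2'
      refine ⟨(Bracketing.node .leaf B).cast (by rw [List.sum_cons]), ?_, ?_⟩
      · rw [isLeaf_cast]; exact isLeaf_node _ _
      · rw [comp_cast, comp_node, hB1]
        simp [comp_leaf, hB2]
    · obtain ⟨C, hC1, hC2⟩ := extend l (fun y hy => hv y (by simp [hy]))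
        (Bracketing.node .leaf .leaf) (by simp)
      refine ⟨C.cast (by rw [List.sum_cons]), ?_, ?_⟩
      · rw [isLeaf_cast]; exact hC1
      · rw [comp_cast, hC2, comp_node]
        simp

def comps : ℕ → Finset (List ℕ)
  | 0 => {[]}
  | 1 => {[1]}
  | (n+2) => ((comps (n+1)).image (List.cons 1)) ∪ ((comps n).image (List.cons 2))

lemma card_comps : ∀ n, (comps n).card = Nat.fib (n + 1) := by
  intro n
  induction n using Nat.strong_induction_on with
  | _ n ih =>
    match n with
    | 0 => simp [comps]
    | 1 => simp [comps]
    | (n+2) =>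
      rw [comps, Finset.card_union_of_disjoint, Finset.card_image_of_injective _
          (fun a b h => by injection h),
        Finset.card_image_of_injective _ (fun a b h => by injection h),
        ih (n+1) (by omega), ih n (by omega)]
      · simp only [show n+2+1 = (n+1)+2 from rfl, Nat.fib_add_two]
        omega
      · rw [Finset.disjoint_left]
        rintro l hl hl'
        simp only [Finset.mem_image] at hl hl'
        obtain ⟨a, _, rfl⟩ := hl
        obtain ⟨b, _, hb⟩ := hl'
        injection hb with h1 _
        omega

lemma mem_comps : ∀ n (l : List ℕ), l ∈ comps n ↔ ((∀ x ∈ l, x = 1 ∨ x = 2) ∧ l.sum = n) := by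
  intro n
  induction n using Nat.strong_induction_on with
  | _ n ih =>
    match n with
    | 0 =>
      intro l
      simp only [comps, Finset.mem_singleton]
      constructor
      · rintro rfl; simp
      · rintro ⟨hv, hs⟩
        cases l with
        | nil => rfl
        | cons x l => rcases hv x (by simp) with rfl | rfl <;> simp at hs
    | 1 =>
      intro l
      simp only [comps, Finset.mem_singleton]
      constructor
      · rintro rfl; simp
      · rintro ⟨hv, hs⟩
        cases l with
        | nil => simp at hs
        | cons x l =>
          rcases hv x (by simp) with rfl | rfl
          · simp only [List.sum_cons] at hs
            have : l.sum = 0 := by omega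
            cases l with
            | nil => rfl
            | cons y l => rcases hv y (by simp) with rfl | rfl <;> simp at this
          · simp only [List.sum_cons] at hs; omega
    | (n+2) =>
      intro l
      simp only [comps, Finset.mem_union, Finset.mem_image,
        ih (n+1) (by omega), ih n (by omega)]
      constructor
      · rintro (⟨a, ⟨hv, hs⟩, rfl⟩ | ⟨a, ⟨hv, hs⟩, rfl⟩) <;>
          refine ⟨?_, by simp [hs]; omega⟩ <;>
          (intro x hx; rcases List.mem_cons.1 hx with rfl | hx)
        · exact Or.inl rfl
        · exact hv x hx
        · exact Or.inr rfl
        · exact hv x hx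
      · rintro ⟨hv, hs⟩
        cases l with
        | nil => simp at hs
        | cons x l =>
          rcases hv x (by simp) with rfl | rfl
          · exact Or.inl ⟨l, ⟨fun y hy => hv y (by simp [hy]), by simp at hs; omega⟩, rfl⟩
          · exact Or.inr ⟨l, ⟨fun y hy => hv y (by simp [hy]), by simp at hs; omega⟩, rfl⟩

lemma sum_all_ones : ∀ (l : List ℕ), (∀ x ∈ l, x = 1) → l.sum = l.length := by
  intro l
  induction l with
  | nil => simp
  | cons x t iht =>
    intro h
    rw [h x (by simp)]
    simp [iht (fun y hy => h y (by simp [hy]))]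
    omega

open Classical in
lemma filter_no2 (n : ℕ) :
    (comps n).filter (fun l => ¬ (2 ∈ l)) = {List.replicate n 1} := by
  ext l
  simp only [Finset.mem_filter, Finset.mem_singleton, mem_comps]
  constructor
  · rintro ⟨⟨hv, hs⟩, h2⟩
    have hall : ∀ x ∈ l, x = 1 := by
      intro x hx
      rcases hv x hx with rfl | rfl
      · rfl
      · exact absurd hx h2
    have hlen : l.length = n := by rw [← hs, sum_all_ones l hall]
    rw [List.eq_replicate_iff]
    exact ⟨hlen, hall⟩
  · rintro rfl
    refine ⟨⟨by simp +contextual, by simp⟩, by simp⟩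

lemma nonleaf {n : ℕ} (hn : 2 ≤ n) (B : Bracketing n) : B.isLeaf = false := by
  cases B with
  | leaf => omega
  | node P Q => rfl

open Classical in
lemma eval_eq' {n : ℕ} (B : Bracketing n) (hB : B.isLeaf = false) (v : Fin n → Fin 3) :
    B.eval op3 v = if ok B.comp (List.ofFn v) then 1 else 0 := by
  have := eval_eq B v
  rw [hB] at this
  simpa using this

lemma key {n : ℕ} (hn : 2 ≤ n) (B B' : Bracketing n) :
    B.eval op3 = B'.eval op3 ↔ B.comp = B'.comp := by
  have hB := nonleaf hn B
  have hB' := nonleaf hn B'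
  constructor
  · intro h
    have hok : ∀ w : List (Fin 3), w.length = n → (ok B.comp w ↔ ok B'.comp w) := by
      intro w hw
      set v : Fin n → Fin 3 := fun i => w.get ⟨i, by omega⟩ with hv
      have hofn : List.ofFn v = w := by
        apply List.ext_get (by simp [hw])
        intro i h1 h2
        rw [List.get_ofFn]
        rfl
      have := congrFun h v
      rw [eval_eq' B hB v, eval_eq' B' hB' v, hofn] at this
      by_cases h1 : ok B.comp w <;> by_cases h2 : ok B'.comp w <;>
        simp [h1, h2] at this <;> tauto
    apply distinguish _ _ (comp_valid B) (comp_valid B')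
    · rw [hok _ (by rw [wit_length _ (comp_valid B')]; exact comp_sum B')]
      exact ok_wit _ (comp_valid B')
    · rw [← hok _ (by rw [wit_length _ (comp_valid B)]; exact comp_sum B)]
      exact ok_wit _ (comp_valid B)
  · intro h
    funext v
    rw [eval_eq' B hB v, eval_eq' B' hB' v, h]


/-- Paper's Proposition 5.6: for operation 79 on the three-element set
(`1∘1 = 2∘2 = 1`, all other products `0`), `s(n) = F_{n+1} - 1` for `n ≥ 2`. -/
theorem stmt15 (n : ℕ) (hn : 2 ≤ n) :
    assocSpectrum (fun x y : Fin 3 => if x = y ∧ x ≠ 0 then 1 else 0) n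
      = Nat.fib (n + 1) - 1 := by
  classical
  have hop : (fun x y : Fin 3 => if x = y ∧ x ≠ 0 then (1 : Fin 3) else 0) = op3 := rfl
  rw [assocSpectrum, hop]
  set S : Finset (List ℕ) := (comps n).filter (fun l => 2 ∈ l) with hS
  -- the bijection
  have hmem : ∀ B : Bracketing n, B.comp ∈ S := by
    intro B
    rw [hS, Finset.mem_filter, mem_comps]
    exact ⟨⟨comp_valid B, comp_sum B⟩, comp_two B (nonleaf hn B)⟩
  set F : {f : (Fin n → Fin 3) → Fin 3 // ∃ B : Bracketing n, f = Bracketing.eval op3 B} →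
      {l // l ∈ S} := fun f => ⟨(f.2.choose).comp, hmem _⟩ with hF
  have hFval : ∀ f : {f : (Fin n → Fin 3) → Fin 3 // ∃ B : Bracketing n,
      f = Bracketing.eval op3 B}, ∀ B : Bracketing n, f.1 = B.eval op3 → (F f).1 = B.comp := by
    intro f B hfB
    have hsp := f.2.choose_spec
    exact (key hn _ _).1 (by rw [← hsp, hfB])
  have hbij : Function.Bijective F := by
    constructor
    · rintro f g hfg
      have h1 := hFval f f.2.choose f.2.choose_spec
      have h2 := hFval g g.2.choose g.2.choose_spec
      have : f.2.choose.comp = g.2.choose.comp := by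
        have := congrArg Subtype.val hfg
        rw [h1, h2] at this
        exact this
      have heval : f.2.choose.eval op3 = g.2.choose.eval op3 := (key hn _ _).2 this
      apply Subtype.ext
      rw [f.2.choose_spec, g.2.choose_spec, heval]
    · rintro ⟨l, hl⟩
      rw [hS, Finset.mem_filter, mem_comps] at hl
      obtain ⟨⟨hv, hsum⟩, h2l⟩ := hl
      obtain ⟨B0, hB0leaf, hB0comp⟩ := exists_brack l hv h2l
      set B : Bracketing n := B0.cast hsum
      have hBcomp : B.comp = l := by rw [comp_cast]; exact hB0comp
      refine ⟨⟨B.eval op3, B, rfl⟩, ?_⟩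
      apply Subtype.ext
      rw [hFval ⟨B.eval op3, B, rfl⟩ B rfl, hBcomp]
  rw [Nat.card_congr (Equiv.ofBijective F hbij), Nat.card_eq_finsetCard]
  have hsplit := Finset.card_filter_add_card_filter_not (s := comps n)
    (fun l => 2 ∈ l)
  rw [card_comps] at hsplit
  have hneg : ((comps n).filter (fun l => ¬ (2 ∈ l))).card = 1 := by
    rw [filter_no2 n]
    simp
  rw [hS]
  omega
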